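/- Let d ≥ 1, λ > 0, and let X_1, X_2, … be i.i.d. random vectors in ℝ^d whose coordinates are independent and each exponentially distributed with rate λ. Let {y_n} be a sequence of positive edge distances with n·y_n^d / log n → c ∈ (0,∞). Let δ_n(y_n) be the minimum vertex degree of the random geometric graph G_n(y_n). Then almost surely, limsup_{n→∞} δ_n(y_n)/(n·y_n^d) ≤ λ^d. -/

import Mathlib

open MeasureTheory ProbabilityTheory Real Filter
open Set
open scoped ENNReal NNReal

lemma expMeasure_apply (l : ℝ) {s : Set ℝ} (hs : MeasurableSet s) :
    expMeasure l s = ∫⁻ x in s, exponentialPDF l x := by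
  rw [expMeasure, gammaMeasure, withDensity_apply _ hs]
  rfl

lemma expMeasure_Ioi (l : ℝ) (hl : 0 < l) {t : ℝ} (ht : 0 ≤ t) :
    expMeasure l (Set.Ioi t) = ENNReal.ofReal (Real.exp (-(l * t))) := by
  haveI := isProbabilityMeasure_expMeasure hl
  have hIic : expMeasure l (Set.Iic t) = ENNReal.ofReal (1 - Real.exp (-(l * t))) := by
    rw [expMeasure_apply l measurableSet_Iic, lintegral_exponentialPDF_eq_antiDeriv hl, if_pos ht]
  have h1 : Set.Ioi t = (Set.Iic t)ᶜ := (Set.compl_Iic).symm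
  rw [h1, prob_compl_eq_one_sub measurableSet_Iic, hIic]
  rw [← ENNReal.ofReal_one, ← ENNReal.ofReal_sub _ (sub_nonneg.2 (Real.exp_le_one_iff.2 (by nlinarith)))]
  norm_num

lemma expMeasure_Icc_le (l : ℝ) (hl : 0 < l) {m y : ℝ} (hm : 0 ≤ m) (hy : 0 ≤ y) :
    expMeasure l (Set.Icc (m - y) (m + y))
      ≤ ENNReal.ofReal (2 * l * y * Real.exp (l * y - l * m)) := by
  rw [expMeasure_apply l measurableSet_Icc]
  have hb : ∀ x ∈ Set.Icc (m - y) (m + y),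
      exponentialPDF l x ≤ ENNReal.ofReal (l * Real.exp (l * y - l * m)) := by
    intro x hx
    rcases lt_or_ge x 0 with h | h
    · rw [exponentialPDF_of_neg h]; exact zero_le
    · rw [exponentialPDF_of_nonneg h]
      apply ENNReal.ofReal_le_ofReal
      apply mul_le_mul_of_nonneg_left _ hl.le
      apply Real.exp_le_exp.2
      nlinarith [hx.1]
  calc ∫⁻ x in Set.Icc (m - y) (m + y), exponentialPDF l x
      ≤ ∫⁻ _ in Set.Icc (m - y) (m + y), ENNReal.ofReal (l * Real.exp (l * y - l * m)) :=
        setLIntegral_mono (by measurability) hb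
    _ = ENNReal.ofReal (l * Real.exp (l * y - l * m)) * volume (Set.Icc (m - y) (m + y)) := by
        rw [setLIntegral_const]
    _ ≤ ENNReal.ofReal (l * Real.exp (l * y - l * m)) * ENNReal.ofReal (2 * y) := by
        gcongr
        rw [Real.volume_Icc]
        apply ENNReal.ofReal_le_ofReal; ring_nf; rfl
    _ = ENNReal.ofReal (2 * l * y * Real.exp (l * y - l * m)) := by
        rw [← ENNReal.ofReal_mul (by positivity)]
        ring_nf


variable {d : ℕ}

/-- the closed sup-norm ball as a box -/
lemma ball_eq_pi (a : Fin d → ℝ) {y : ℝ} (hy : 0 ≤ y) :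
    {b : Fin d → ℝ | ‖a - b‖ ≤ y} = Set.pi Set.univ (fun r => Set.Icc (a r - y) (a r + y)) := by
  ext b
  simp only [Set.mem_setOf_eq, Set.mem_pi, Set.mem_univ, forall_true_left, Set.mem_Icc]
  rw [pi_norm_le_iff_of_nonneg hy]
  constructor
  · intro h r
    have := h r
    rw [Pi.sub_apply, Real.norm_eq_abs, abs_le] at this
    constructor <;> linarith [this.1, this.2]
  · intro h r
    rw [Pi.sub_apply, Real.norm_eq_abs, abs_le]
    constructor <;> linarith [(h r).1, (h r).2]

lemma pi_exp_T (l : ℝ) (hl : 0 < l) {t : ℝ} (ht : 0 ≤ t) :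
    Measure.pi (fun _ : Fin d => expMeasure l) (Set.pi Set.univ (fun _ => Set.Ioi t))
      = ENNReal.ofReal (Real.exp (-(l * t))) ^ d := by
  haveI := isProbabilityMeasure_expMeasure hl
  rw [Measure.pi_pi]
  simp [expMeasure_Ioi l hl ht]

lemma pi_exp_ball_le (l : ℝ) (hl : 0 < l) {y t : ℝ} (hy : 0 ≤ y) (ht : 0 ≤ t)
    {a : Fin d → ℝ} (ha : ∀ r, t < a r) :
    Measure.pi (fun _ : Fin d => expMeasure l) {b : Fin d → ℝ | ‖a - b‖ ≤ y}
      ≤ ENNReal.ofReal (2 * l * y * Real.exp (l * y - l * t)) ^ d := by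
  haveI := isProbabilityMeasure_expMeasure hl
  rw [ball_eq_pi a hy, Measure.pi_pi]
  have hcard : ENNReal.ofReal (2 * l * y * Real.exp (l * y - l * t)) ^ d
      = ∏ _r : Fin d, ENNReal.ofReal (2 * l * y * Real.exp (l * y - l * t)) := by
    rw [Finset.prod_const, Finset.card_univ, Fintype.card_fin]
  rw [hcard]
  apply Finset.prod_le_prod'
  intro r _
  calc expMeasure l (Set.Icc (a r - y) (a r + y))
      ≤ ENNReal.ofReal (2 * l * y * Real.exp (l * y - l * (a r))) :=
        expMeasure_Icc_le l hl (le_trans ht (ha r).le) hy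
    _ ≤ ENNReal.ofReal (2 * l * y * Real.exp (l * y - l * t)) := by
        apply ENNReal.ofReal_le_ofReal
        have h1 : Real.exp (l * y - l * a r) ≤ Real.exp (l * y - l * t) := by
          apply Real.exp_le_exp.2; nlinarith [ha r]
        exact mul_le_mul_of_nonneg_left h1 (by positivity)

set_option maxHeartbeats 1000000 in
lemma triple_bound {d : ℕ} {Ω : Type*} [MeasureSpace Ω] [IsProbabilityMeasure (ℙ : Measure Ω)]
    (l : ℝ) (hl : 0 < l)
    (X : ℕ → Ω → (Fin d → ℝ)) (hXm : ∀ i, Measurable (X i))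
    (hindep : iIndepFun X ℙ)
    (hdist : ∀ i, Measure.map (X i) ℙ = Measure.pi fun _ : Fin d => expMeasure l)
    {i j k : ℕ} (hji : j ≠ i) (hki : k ≠ i) (hjk : j ≠ k)
    {t y : ℝ} (ht : 0 ≤ t) (hy : 0 ≤ y) :
    ℙ (X i ⁻¹' (Set.pi Set.univ (fun _ : Fin d => Set.Ioi t))
        ∩ {ω | ‖X i ω - X j ω‖ ≤ y} ∩ {ω | ‖X i ω - X k ω‖ ≤ y})
      ≤ ENNReal.ofReal (Real.exp (-(l * t))) ^ d
          * (ENNReal.ofReal (2 * l * y * Real.exp (l * y - l * t)) ^ d) ^ 2 := by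
  classical
  haveI := isProbabilityMeasure_expMeasure hl
  set ν : Measure (Fin d → ℝ) := Measure.pi (fun _ : Fin d => expMeasure l) with hν
  haveI : IsProbabilityMeasure ν := by rw [hν]; infer_instance
  set T : Set (Fin d → ℝ) := Set.pi Set.univ (fun _ : Fin d => Set.Ioi t) with hT
  have hTmeas : MeasurableSet T := MeasurableSet.univ_pi (fun _ => measurableSet_Ioi)
  set Q : ℝ≥0∞ := ENNReal.ofReal (2 * l * y * Real.exp (l * y - l * t)) ^ d with hQ
  -- joint law
  have hpair : Measure.map (fun ω => (X j ω, X k ω)) ℙ = ν.prod ν := by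
    have h := (indepFun_iff_map_prod_eq_prod_map_map
      (hXm j).aemeasurable (hXm k).aemeasurable).mp (hindep.indepFun hjk)
    rw [h, hdist j, hdist k]
  have hIJK : IndepFun (X i) (fun ω => (X j ω, X k ω)) ℙ :=
    (hindep.indepFun_prodMk hXm j k i hji hki).symm
  have hmap : Measure.map (fun ω => (X i ω, (X j ω, X k ω))) ℙ = ν.prod (ν.prod ν) := by
    have h := (indepFun_iff_map_prod_eq_prod_map_map
      (hXm i).aemeasurable ((hXm j).prodMk (hXm k)).aemeasurable).mp hIJK
    rw [h, hdist i, hpair]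
  set S : Set ((Fin d → ℝ) × ((Fin d → ℝ) × (Fin d → ℝ))) :=
    {q | q.1 ∈ T ∧ ‖q.1 - q.2.1‖ ≤ y ∧ ‖q.1 - q.2.2‖ ≤ y} with hS
  have hSmeas : MeasurableSet S := by
    apply MeasurableSet.inter
    · exact measurable_fst hTmeas
    apply MeasurableSet.inter
    · exact measurableSet_le
        ((continuous_fst.sub (continuous_fst.comp continuous_snd)).norm).measurable
        measurable_const
    · exact measurableSet_le
        ((continuous_fst.sub (continuous_snd.comp continuous_snd)).norm).measurable
        measurable_const
  have hev : X i ⁻¹' T ∩ {ω | ‖X i ω - X j ω‖ ≤ y} ∩ {ω | ‖X i ω - X k ω‖ ≤ y}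
      = (fun ω => (X i ω, (X j ω, X k ω))) ⁻¹' S := by
    ext ω; simp [hS, Set.mem_setOf_eq, and_assoc]
  rw [hev, ← Measure.map_apply ((hXm i).prodMk ((hXm j).prodMk (hXm k))) hSmeas, hmap]
  rw [Measure.prod_apply hSmeas]
  have hpoint : ∀ a, (ν.prod ν) (Prod.mk a ⁻¹' S) ≤ T.indicator (fun _ => Q ^ 2) a := by
    intro a
    by_cases haT : a ∈ T
    · have hpre : Prod.mk a ⁻¹' S = {b : Fin d → ℝ | ‖a - b‖ ≤ y} ×ˢ {b : Fin d → ℝ | ‖a - b‖ ≤ y} := by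
        ext bc; simp [hS, haT, Set.mem_prod]
      rw [hpre, Measure.prod_prod, Set.indicator_of_mem haT]
      have hball : ν {b : Fin d → ℝ | ‖a - b‖ ≤ y} ≤ Q := by
        rw [hν, hQ]
        exact pi_exp_ball_le l hl hy ht (fun r => haT r (Set.mem_univ r))
      calc ν {b : Fin d → ℝ | ‖a - b‖ ≤ y} * ν {b : Fin d → ℝ | ‖a - b‖ ≤ y}
          ≤ Q * Q := mul_le_mul' hball hball
        _ = Q ^ 2 := (sq Q).symm
    · have hpre : Prod.mk a ⁻¹' S = ∅ := by
        ext bc; simp [hS, haT]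
      rw [hpre, Set.indicator_of_notMem haT]
      simp
  calc ∫⁻ a, (ν.prod ν) (Prod.mk a ⁻¹' S) ∂ν
      ≤ ∫⁻ a, T.indicator (fun _ => Q ^ 2) a ∂ν := lintegral_mono hpoint
    _ = Q ^ 2 * ν T := by rw [lintegral_indicator hTmeas]; simp [mul_comm]
    _ = ENNReal.ofReal (Real.exp (-(l * t))) ^ d * Q ^ 2 := by
        rw [hν, hT, pi_exp_T l hl ht, mul_comm]

lemma deg_two_witness {d : ℕ} {Ω : Type*} (X : ℕ → Ω → (Fin d → ℝ))
    {y : ℝ} {n i : ℕ} {ω : Ω} (h : 2 ≤ Nat.card {j : ℕ // j < n ∧ j ≠ i ∧ ‖X i ω - X j ω‖ ≤ y}) :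
    ∃ j k : ℕ, j < n ∧ k < n ∧ j ≠ k ∧ j ≠ i ∧ k ≠ i ∧
      ‖X i ω - X j ω‖ ≤ y ∧ ‖X i ω - X k ω‖ ≤ y := by
  set S := {j : ℕ // j < n ∧ j ≠ i ∧ ‖X i ω - X j ω‖ ≤ y} with hSdef
  haveI : Finite S := by
    apply Finite.of_injective (fun s : S => (⟨s.1, s.2.1⟩ : Fin n))
    intro a b hab
    apply Subtype.ext
    exact congrArg Fin.val hab
  have h2 : Nontrivial S := Finite.one_lt_card_iff_nontrivial.mp (by omega)
  obtain ⟨⟨j, hj⟩, ⟨k, hk⟩, hne⟩ := h2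
  exact ⟨j, k, hj.1, hk.1, fun hjk => hne (by simp [hjk]), hj.2.1, hk.2.1, hj.2.2, hk.2.2⟩

set_option maxHeartbeats 1000000 in
lemma bad2_prob {d : ℕ} {Ω : Type*} [MeasureSpace Ω] [IsProbabilityMeasure (ℙ : Measure Ω)]
    (l : ℝ) (hl : 0 < l)
    (X : ℕ → Ω → (Fin d → ℝ)) (hXm : ∀ i, Measurable (X i))
    (hindep : iIndepFun X ℙ)
    (hdist : ∀ i, Measure.map (X i) ℙ = Measure.pi fun _ : Fin d => expMeasure l)
    {t y : ℝ} (ht : 0 ≤ t) (hy : 0 ≤ y) (n : ℕ) :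
    ℙ (⋃ i ∈ Finset.range n, (X i ⁻¹' (Set.pi Set.univ (fun _ : Fin d => Set.Ioi t))
        ∩ {ω | 2 ≤ Nat.card {j : ℕ // j < n ∧ j ≠ i ∧ ‖X i ω - X j ω‖ ≤ y}}))
      ≤ (n : ℝ≥0∞) ^ 3 * (ENNReal.ofReal (Real.exp (-(l * t))) ^ d
          * (ENNReal.ofReal (2 * l * y * Real.exp (l * y - l * t)) ^ d) ^ 2) := by
  classical
  set T : Set (Fin d → ℝ) := Set.pi Set.univ (fun _ : Fin d => Set.Ioi t) with hT
  set B : ℝ≥0∞ := ENNReal.ofReal (Real.exp (-(l * t))) ^ d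
      * (ENNReal.ofReal (2 * l * y * Real.exp (l * y - l * t)) ^ d) ^ 2 with hB
  have hstep : ∀ i, ℙ (X i ⁻¹' T
      ∩ {ω | 2 ≤ Nat.card {j : ℕ // j < n ∧ j ≠ i ∧ ‖X i ω - X j ω‖ ≤ y}})
      ≤ (n : ℝ≥0∞) ^ 2 * B := by
    intro i
    set P : Finset (ℕ × ℕ) := (Finset.range n ×ˢ Finset.range n).filter
      (fun p => p.1 ≠ p.2 ∧ p.1 ≠ i ∧ p.2 ≠ i) with hP
    have hsub : X i ⁻¹' T
        ∩ {ω | 2 ≤ Nat.card {j : ℕ // j < n ∧ j ≠ i ∧ ‖X i ω - X j ω‖ ≤ y}}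
        ⊆ ⋃ p ∈ P, (X i ⁻¹' T ∩ {ω | ‖X i ω - X p.1 ω‖ ≤ y} ∩ {ω | ‖X i ω - X p.2 ω‖ ≤ y}) := by
      intro ω hω
      obtain ⟨j, k, hjn, hkn, hjk, hji, hki, hcj, hck⟩ := deg_two_witness X hω.2
      refine Set.mem_biUnion (show ((j, k) : ℕ × ℕ) ∈ P by
        simp [hP, Finset.mem_filter, Finset.mem_product, Finset.mem_range, hjn, hkn, hjk, hji, hki]) ?_
      exact ⟨⟨hω.1, hcj⟩, hck⟩
    calc ℙ _ ≤ ℙ (⋃ p ∈ P, (X i ⁻¹' T ∩ {ω | ‖X i ω - X p.1 ω‖ ≤ y}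
            ∩ {ω | ‖X i ω - X p.2 ω‖ ≤ y})) := measure_mono hsub
      _ ≤ ∑ p ∈ P, ℙ (X i ⁻¹' T ∩ {ω | ‖X i ω - X p.1 ω‖ ≤ y}
            ∩ {ω | ‖X i ω - X p.2 ω‖ ≤ y}) := measure_biUnion_finset_le P _
      _ ≤ ∑ _p ∈ P, B := by
          apply Finset.sum_le_sum
          intro p hp
          simp only [hP, Finset.mem_filter, Finset.mem_product, Finset.mem_range] at hp
          exact triple_bound l hl X hXm hindep hdist hp.2.2.1 hp.2.2.2 hp.2.1 ht hy
      _ = (P.card : ℝ≥0∞) * B := by rw [Finset.sum_const, nsmul_eq_mul]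
      _ ≤ (n : ℝ≥0∞) ^ 2 * B := by
          gcongr
          have : P.card ≤ n * n := by
            calc P.card ≤ ((Finset.range n) ×ˢ (Finset.range n)).card := Finset.card_filter_le _ _
              _ = n * n := by rw [Finset.card_product, Finset.card_range]
          calc (P.card : ℝ≥0∞) ≤ ((n * n : ℕ) : ℝ≥0∞) := by exact_mod_cast this
            _ = (n : ℝ≥0∞) ^ 2 := by push_cast; ring
  calc ℙ (⋃ i ∈ Finset.range n, (X i ⁻¹' T
        ∩ {ω | 2 ≤ Nat.card {j : ℕ // j < n ∧ j ≠ i ∧ ‖X i ω - X j ω‖ ≤ y}}))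
      ≤ ∑ i ∈ Finset.range n, ℙ (X i ⁻¹' T
        ∩ {ω | 2 ≤ Nat.card {j : ℕ // j < n ∧ j ≠ i ∧ ‖X i ω - X j ω‖ ≤ y}}) :=
        measure_biUnion_finset_le _ _
    _ ≤ ∑ _i ∈ Finset.range n, (n : ℝ≥0∞) ^ 2 * B := Finset.sum_le_sum (fun i _ => hstep i)
    _ = (n : ℝ≥0∞) * ((n : ℝ≥0∞) ^ 2 * B) := by rw [Finset.sum_const, nsmul_eq_mul, Finset.card_range]
    _ = (n : ℝ≥0∞) ^ 3 * B := by ring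

lemma bad1_prob {d : ℕ} {Ω : Type*} [MeasureSpace Ω] [IsProbabilityMeasure (ℙ : Measure Ω)]
    (l : ℝ) (hl : 0 < l)
    (X : ℕ → Ω → (Fin d → ℝ)) (hXm : ∀ i, Measurable (X i))
    (hindep : iIndepFun X ℙ)
    (hdist : ∀ i, Measure.map (X i) ℙ = Measure.pi fun _ : Fin d => expMeasure l)
    {t : ℝ} (ht : 0 ≤ t) (n : ℕ) :
    ℙ (⋂ i ∈ Finset.range n, X i ⁻¹' (Set.pi Set.univ (fun _ : Fin d => Set.Ioi t))ᶜ)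
      = (1 - ENNReal.ofReal (Real.exp (-(l * t))) ^ d) ^ n := by
  classical
  haveI := isProbabilityMeasure_expMeasure hl
  set T : Set (Fin d → ℝ) := Set.pi Set.univ (fun _ : Fin d => Set.Ioi t) with hT
  have hTmeas : MeasurableSet T := MeasurableSet.univ_pi (fun _ => measurableSet_Ioi)
  have hprod := hindep.measure_inter_preimage_eq_mul (Finset.range n)
    (sets := fun _ => Tᶜ) (fun i _ => hTmeas.compl)
  rw [hprod]
  have hterm : ∀ i, ℙ (X i ⁻¹' Tᶜ) = 1 - ENNReal.ofReal (Real.exp (-(l * t))) ^ d := by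
    intro i
    have h1 : ℙ (X i ⁻¹' Tᶜ) = (Measure.map (X i) ℙ) Tᶜ :=
      (Measure.map_apply (hXm i) hTmeas.compl).symm
    rw [h1, hdist i]
    haveI : IsProbabilityMeasure (Measure.pi fun _ : Fin d => expMeasure l) := by infer_instance
    rw [prob_compl_eq_one_sub hTmeas, hT, pi_exp_T l hl ht]
  calc ∏ i ∈ Finset.range n, ℙ (X i ⁻¹' Tᶜ)
      = ∏ _i ∈ Finset.range n, (1 - ENNReal.ofReal (Real.exp (-(l * t))) ^ d) :=
        Finset.prod_congr rfl (fun i _ => hterm i)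
    _ = (1 - ENNReal.ofReal (Real.exp (-(l * t))) ^ d) ^ n := by
        rw [Finset.prod_const, Finset.card_range]

lemma eventually_log_pow_le (k : ℕ) {C e : ℝ} (hC : 0 < C) (he : 0 < e) :
    ∀ᶠ n : ℕ in atTop, C * (Real.log n) ^ k ≤ (n : ℝ) ^ e := by
  have h := isLittleO_log_rpow_rpow_atTop (k : ℝ) he
  have hb := h.bound (show (0:ℝ) < 1/C by positivity)
  have h2 : ∀ᶠ n : ℕ in atTop,
      ‖Real.log n ^ (k : ℝ)‖ ≤ (1/C) * ‖(n : ℝ) ^ e‖ :=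
    (tendsto_natCast_atTop_atTop (R := ℝ)).eventually hb
  have h3 : ∀ᶠ n : ℕ in atTop, 1 ≤ Real.log n :=
    (Real.tendsto_log_atTop.comp (tendsto_natCast_atTop_atTop (R := ℝ))).eventually_ge_atTop 1
  filter_upwards [h2, h3, eventually_ge_atTop 1] with n hn hlog hn1
  have hlog0 : 0 ≤ Real.log n := le_trans zero_le_one hlog
  have hn0 : (0:ℝ) ≤ (n : ℝ) := Nat.cast_nonneg n
  have hr : Real.log n ^ (k : ℝ) = Real.log n ^ k := by
    rw [Real.rpow_natCast]
  rw [hr, Real.norm_eq_abs, Real.norm_eq_abs, abs_of_nonneg (by positivity),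
    abs_of_nonneg (Real.rpow_nonneg hn0 e)] at hn
  calc C * Real.log n ^ k ≤ C * ((1/C) * (n : ℝ) ^ e) := by
        apply mul_le_mul_of_nonneg_left hn hC.le
    _ = (n : ℝ) ^ e := by field_simp


/-- The degree of the vertex `X i` in the random geometric graph `G_n(y)` on vertices
`X 0, …, X (n-1)` (with the `l_∞` norm on `Fin d → ℝ`, which is the sup norm of the pi type). -/
noncomputable def rggDeg {d : ℕ} {Ω : Type*} (X : ℕ → Ω → (Fin d → ℝ))
    (y : ℝ) (n i : ℕ) (ω : Ω) : ℕ :=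
  Nat.card {j : ℕ // j < n ∧ j ≠ i ∧ ‖X i ω - X j ω‖ ≤ y}

/-- The minimum vertex degree `δ_n(y)` of the random geometric graph `G_n(y)`. -/
noncomputable def rggMinDeg {d : ℕ} {Ω : Type*} (X : ℕ → Ω → (Fin d → ℝ))
    (y : ℝ) (n : ℕ) (ω : Ω) : ℕ :=
  sInf ((fun i => rggDeg X y n i ω) '' Set.Iio n)

/-- The maximum vertex degree `Δ_n(y)` of the random geometric graph `G_n(y)`. -/
noncomputable def rggMaxDeg {d : ℕ} {Ω : Type*} (X : ℕ → Ω → (Fin d → ℝ))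
    (y : ℝ) (n : ℕ) (ω : Ω) : ℕ :=
  sSup ((fun i => rggDeg X y n i ω) '' Set.Iio n)

/-- The number of edges `ε_n(y)` of the random geometric graph `G_n(y)`. -/
noncomputable def rggEdgeCount {d : ℕ} {Ω : Type*} (X : ℕ → Ω → (Fin d → ℝ))
    (y : ℝ) (n : ℕ) (ω : Ω) : ℕ :=
  Nat.card {p : ℕ × ℕ // p.1 < p.2 ∧ p.2 < n ∧ ‖X p.1 ω - X p.2 ω‖ ≤ y}

set_option maxHeartbeats 2000000

/-- **Minimum vertex degree, upper bound.** In the connectivity regime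
`n·y_n^d/log n → c ∈ (0,∞)`, almost surely `limsup δ_n(y_n)/(n·y_n^d) ≤ λ^d`. -/
theorem min_degree_limsup_le
    {d : ℕ} (hd : 1 ≤ d) (l : ℝ) (hl : 0 < l)
    {Ω : Type*} [MeasureSpace Ω] [IsProbabilityMeasure (ℙ : Measure Ω)]
    (X : ℕ → Ω → (Fin d → ℝ)) (hXm : ∀ i, Measurable (X i))
    (hindep : iIndepFun X ℙ)
    (hdist : ∀ i, Measure.map (X i) ℙ = Measure.pi fun _ : Fin d => expMeasure l)
    (y : ℕ → ℝ) (hy : ∀ n, 0 < y n) (c : ℝ) (hc : 0 < c)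
    (hreg : Tendsto (fun n : ℕ => (n : ℝ) * y n ^ d / Real.log n) atTop (nhds c)) :
    ∀ᵐ ω ∂ℙ,
      limsup (fun n : ℕ => (rggMinDeg X (y n) n ω : ℝ) / ((n : ℝ) * y n ^ d)) atTop
        ≤ l ^ d := by
  classical
  have hd0 : d ≠ 0 := by omega
  set t : ℕ → ℝ := fun n => Real.log ((n : ℝ) / (Real.log n) ^ 2) / (l * d) with htdef
  set p : ℕ → ℝ := fun n => (Real.log n) ^ 2 / n with hpdef
  set Bad1 : ℕ → Set Ω := fun n =>
    ⋂ i ∈ Finset.range n, X i ⁻¹' (Set.pi Set.univ (fun _ : Fin d => Set.Ioi (t n)))ᶜ with hB1def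
  set Bad2 : ℕ → Set Ω := fun n =>
    ⋃ i ∈ Finset.range n, (X i ⁻¹' (Set.pi Set.univ (fun _ : Fin d => Set.Ioi (t n)))
      ∩ {ω | 2 ≤ Nat.card {j : ℕ // j < n ∧ j ≠ i ∧ ‖X i ω - X j ω‖ ≤ y n}}) with hB2def
  set Bad : ℕ → Set Ω := fun n => Bad1 n ∪ Bad2 n with hBdef
  set C₀ : ℝ := ((2 * l) ^ d) ^ 2 * (2 * c) ^ 2 * (Real.exp ((d : ℝ) * l)) ^ 2 with hC0def
  have hC0pos : 0 < C₀ := by positivity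
  have hlogT : Tendsto (fun n : ℕ => Real.log n) atTop atTop :=
    Real.tendsto_log_atTop.comp (tendsto_natCast_atTop_atTop (R := ℝ))
  have ev2 : ∀ᶠ n : ℕ in atTop, 2 ≤ Real.log n := hlogT.eventually_ge_atTop 2
  have evlogsq : ∀ᶠ n : ℕ in atTop, (Real.log n) ^ 2 ≤ (n : ℝ) := by
    filter_upwards [eventually_log_pow_le 2 one_pos one_pos] with n hn
    simpa using hn
  have evfin : ∀ᶠ n : ℕ in atTop,
      C₀ * (Real.log n) ^ 8 / (n : ℝ) ^ 2 ≤ (n : ℝ) ^ (-(3/2) : ℝ) := by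
    filter_upwards [eventually_log_pow_le 8 hC0pos (show (0:ℝ) < 1/2 by norm_num),
      eventually_ge_atTop 1] with n hn hn1
    have hn0 : (0:ℝ) < (n : ℝ) := by exact_mod_cast hn1
    have hid : (n : ℝ) ^ (-(3/2) : ℝ) = (n : ℝ) ^ ((1/2 : ℝ)) / (n : ℝ) ^ 2 := by
      rw [← Real.rpow_natCast (n : ℝ) 2, ← Real.rpow_sub hn0]
      norm_num
    rw [hid]
    apply div_le_div_of_nonneg_right hn (by positivity) |>.trans_eq rfl
  have hlogdiv : Tendsto (fun n : ℕ => Real.log n / (n : ℝ)) atTop (nhds 0) :=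
    (Real.isLittleO_log_id_atTop.tendsto_div_nhds_zero).comp (tendsto_natCast_atTop_atTop (R := ℝ))
  have evyd : ∀ᶠ n : ℕ in atTop, (y n) ^ d ≤ 2 * c * Real.log n / n := by
    filter_upwards [hreg.eventually (eventually_le_nhds (show c < 2 * c by linarith)),
      ev2, eventually_ge_atTop 1] with n h1 h2 h3
    have hn0 : (0:ℝ) < (n : ℝ) := by exact_mod_cast h3
    have hlogpos : (0:ℝ) < Real.log n := by linarith
    have hid : (y n) ^ d = ((n : ℝ) * y n ^ d / Real.log n) * (Real.log n / n) := by
      field_simp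
    rw [hid]
    calc ((n : ℝ) * y n ^ d / Real.log n) * (Real.log n / n)
        ≤ (2 * c) * (Real.log n / n) := by
          apply mul_le_mul_of_nonneg_right h1 (by positivity)
      _ = 2 * c * Real.log n / n := by ring
  have evy1 : ∀ᶠ n : ℕ in atTop, y n ≤ 1 := by
    have hyd0 : Tendsto (fun n : ℕ => (y n) ^ d) atTop (nhds 0) := by
      have hmul := hreg.mul hlogdiv
      rw [mul_zero] at hmul
      apply hmul.congr'
      filter_upwards [ev2, eventually_ge_atTop 1] with n h2 h3
      have hn0 : (0:ℝ) < (n : ℝ) := by exact_mod_cast h3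
      have hlogpos : (0:ℝ) < Real.log n := by linarith
      field_simp
    filter_upwards [hyd0.eventually (eventually_le_nhds one_pos)] with n hn
    exact (pow_le_one_iff_of_nonneg (hy n).le hd0).mp hn
  have evdenom : ∀ᶠ n : ℕ in atTop, 1 / ((n : ℝ) * y n ^ d) ≤ l ^ d := by
    have hnyd : Tendsto (fun n : ℕ => (n : ℝ) * y n ^ d) atTop atTop := by
      have h := Filter.Tendsto.pos_mul_atTop hc hreg hlogT
      apply h.congr'
      filter_upwards [ev2] with n h2
      have hlogpos : (0:ℝ) < Real.log n := by linarith
      field_simp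
    filter_upwards [hnyd.eventually_ge_atTop ((l ^ d)⁻¹), hnyd.eventually_gt_atTop 0]
      with n h1 h2
    rw [div_le_iff₀ h2]
    have hld : (0:ℝ) < l ^ d := pow_pos hl d
    calc (1:ℝ) = l ^ d * (l ^ d)⁻¹ := by field_simp
      _ ≤ l ^ d * ((n : ℝ) * y n ^ d) := by apply mul_le_mul_of_nonneg_left h1 hld.le
  have hkey : ∀ n : ℕ, 2 ≤ Real.log n → (Real.log n) ^ 2 ≤ (n : ℝ) → 1 ≤ n →
      0 ≤ t n ∧ Real.exp (-(l * t n)) ^ d = p n ∧ 0 ≤ p n ∧ p n ≤ 1 := by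
    intro n h2 hsq h1
    have hn0 : (0:ℝ) < (n : ℝ) := by exact_mod_cast h1
    have hlogpos : (0:ℝ) < Real.log n := by linarith
    have hu : (0:ℝ) < (n : ℝ) / (Real.log n) ^ 2 := by positivity
    have hu1 : (1:ℝ) ≤ (n : ℝ) / (Real.log n) ^ 2 := (one_le_div (by positivity)).2 hsq
    have hld : (0:ℝ) < l * d := by
      have : (1:ℝ) ≤ (d:ℝ) := by exact_mod_cast hd
      nlinarith
    refine ⟨div_nonneg (Real.log_nonneg hu1) hld.le, ?_, by positivity,
      (div_le_one hn0).2 hsq⟩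
    calc Real.exp (-(l * t n)) ^ d = Real.exp ((d : ℝ) * -(l * t n)) :=
          (Real.exp_nat_mul _ d).symm
      _ = Real.exp (-(Real.log ((n : ℝ) / (Real.log n) ^ 2))) := by
          congr 1
          rw [htdef]
          have hdR : ((d:ℕ):ℝ) ≠ 0 := by exact_mod_cast hd0
          field_simp
      _ = ((n : ℝ) / (Real.log n) ^ 2)⁻¹ := by rw [Real.exp_neg, Real.exp_log hu]
      _ = p n := by rw [hpdef]; simp [inv_div]
  have evP1 : ∀ᶠ n : ℕ in atTop, ℙ (Bad1 n) ≤ ENNReal.ofReal ((n : ℝ) ^ (-(3/2) : ℝ)) := by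
    filter_upwards [ev2, evlogsq, eventually_ge_atTop 1] with n h2 hsq h1
    obtain ⟨ht0, hexp, hp0, hp1⟩ := hkey n h2 hsq h1
    have hn0 : (0:ℝ) < (n : ℝ) := by exact_mod_cast h1
    have heq : ℙ (Bad1 n) = ENNReal.ofReal ((1 - p n) ^ n) := by
      rw [hB1def]
      rw [bad1_prob l hl X hXm hindep hdist ht0 n]
      rw [← ENNReal.ofReal_pow (Real.exp_nonneg _), hexp, ← ENNReal.ofReal_one,
        ← ENNReal.ofReal_sub _ hp0, ENNReal.ofReal_pow (by linarith)]
    rw [heq]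
    apply ENNReal.ofReal_le_ofReal
    calc (1 - p n) ^ n ≤ Real.exp (-(p n)) ^ n := by
          apply pow_le_pow_left₀ (by linarith)
          linarith [Real.add_one_le_exp (-(p n))]
      _ = Real.exp ((n : ℝ) * -(p n)) := (Real.exp_nat_mul _ n).symm
      _ ≤ Real.exp (Real.log n * (-(3/2))) := by
          apply Real.exp_le_exp.2
          have hid : (n : ℝ) * -(p n) = -((Real.log n) ^ 2) := by
            rw [hpdef]; field_simp
          rw [hid]
          nlinarith
      _ = (n : ℝ) ^ (-(3/2) : ℝ) := (Real.rpow_def_of_pos hn0 _).symm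
  have evP2 : ∀ᶠ n : ℕ in atTop, ℙ (Bad2 n) ≤ ENNReal.ofReal ((n : ℝ) ^ (-(3/2) : ℝ)) := by
    filter_upwards [ev2, evlogsq, eventually_ge_atTop 1, evy1, evyd, evfin]
      with n h2 hsq h1 hy1 hyd hfin
    obtain ⟨ht0, hexp, hp0, hp1⟩ := hkey n h2 hsq h1
    have hn0 : (0:ℝ) < (n : ℝ) := by exact_mod_cast h1
    have hlogpos : (0:ℝ) < Real.log n := by linarith
    set q : ℝ := 2 * l * y n * Real.exp (l * y n - l * t n) with hqdef
    have hyn0 : (0:ℝ) ≤ y n := (hy n).le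
    have hq0 : 0 ≤ q := by
      rw [hqdef]
      exact mul_nonneg (mul_nonneg (mul_nonneg (by norm_num) hl.le) hyn0) (Real.exp_nonneg _)
    have h2b := bad2_prob l hl X hXm hindep hdist ht0 (hy n).le n
    rw [hB2def]
    refine le_trans h2b ?_
    have hconv : (n : ℝ≥0∞) ^ 3 * (ENNReal.ofReal (Real.exp (-(l * t n))) ^ d
        * (ENNReal.ofReal (2 * l * y n * Real.exp (l * y n - l * t n)) ^ d) ^ 2)
        = ENNReal.ofReal ((n : ℝ) ^ 3 * (p n * (q ^ d) ^ 2)) := by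
      rw [← ENNReal.ofReal_pow (Real.exp_nonneg _), hexp,
        ← ENNReal.ofReal_pow (hqdef ▸ hq0 : (0:ℝ) ≤ 2 * l * y n * Real.exp (l * y n - l * t n)),
        ← hqdef, ← ENNReal.ofReal_pow (by positivity : (0:ℝ) ≤ q ^ d),
        ← ENNReal.ofReal_mul hp0, ← ENNReal.ofReal_natCast n,
        ← ENNReal.ofReal_pow (Nat.cast_nonneg n),
        ← ENNReal.ofReal_mul (by positivity)]
    rw [hconv]
    apply ENNReal.ofReal_le_ofReal
    -- real computation
    have hqd : q ^ d = (2 * l) ^ d * (y n) ^ d * (Real.exp ((d : ℝ) * (l * y n)) * p n) := by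
      have hsplit : q ^ d = (2 * l) ^ d * (y n) ^ d * Real.exp (l * y n - l * t n) ^ d := by
        rw [hqdef, mul_pow, mul_pow]
      have hexp2 : Real.exp (l * y n - l * t n) ^ d
          = Real.exp ((d : ℝ) * (l * y n)) * p n := by
        rw [← Real.exp_nat_mul]
        have hid : (d : ℝ) * (l * y n - l * t n)
            = (d : ℝ) * (l * y n) + (d : ℝ) * -(l * t n) := by ring
        rw [hid, Real.exp_add]
        congr 1
        rw [Real.exp_nat_mul, hexp]
      rw [hsplit, hexp2]
    calc (n : ℝ) ^ 3 * (p n * (q ^ d) ^ 2)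
        = (Real.log n) ^ 6 * (((2 * l) ^ d) ^ 2
            * (((y n) ^ d) ^ 2 * (Real.exp ((d : ℝ) * (l * y n))) ^ 2)) := by
          rw [hqd, hpdef]
          field_simp
      _ ≤ (Real.log n) ^ 6 * (((2 * l) ^ d) ^ 2
            * ((2 * c * Real.log n / n) ^ 2 * (Real.exp ((d : ℝ) * l)) ^ 2)) := by
          have he1 : Real.exp ((d : ℝ) * (l * y n)) ≤ Real.exp ((d : ℝ) * l) := by
            apply Real.exp_le_exp.2
            have hdR : (0:ℝ) ≤ (d : ℝ) := Nat.cast_nonneg d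
            nlinarith [mul_nonneg (mul_nonneg hdR hl.le) (sub_nonneg.2 hy1)]
          have hy0 : (0:ℝ) ≤ (y n) ^ d := pow_nonneg (hy n).le d
          have h2c : (0:ℝ) ≤ 2 * c * Real.log n / n := by positivity
          have hsq1 : ((y n) ^ d) ^ 2 ≤ (2 * c * Real.log n / n) ^ 2 := by
            apply pow_le_pow_left₀ hy0 hyd
          have hsq2 : (Real.exp ((d : ℝ) * (l * y n))) ^ 2 ≤ (Real.exp ((d : ℝ) * l)) ^ 2 := by
            apply pow_le_pow_left₀ (Real.exp_nonneg _) he1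
          have hterm : ((y n) ^ d) ^ 2 * (Real.exp ((d : ℝ) * (l * y n))) ^ 2
              ≤ (2 * c * Real.log n / n) ^ 2 * (Real.exp ((d : ℝ) * l)) ^ 2 := by
            apply mul_le_mul hsq1 hsq2 (by positivity) (by positivity)
          apply mul_le_mul_of_nonneg_left _ (by positivity)
          apply mul_le_mul_of_nonneg_left hterm (by positivity)
      _ = C₀ * (Real.log n) ^ 8 / (n : ℝ) ^ 2 := by
          rw [hC0def]
          field_simp
      _ ≤ (n : ℝ) ^ (-(3/2) : ℝ) := hfin
  have evP : ∀ᶠ n : ℕ in atTop,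
      ℙ (Bad n) ≤ ENNReal.ofReal (2 * (n : ℝ) ^ (-(3/2) : ℝ)) := by
    filter_upwards [evP1, evP2] with n h1 h2
    rw [hBdef]
    calc ℙ (Bad1 n ∪ Bad2 n) ≤ ℙ (Bad1 n) + ℙ (Bad2 n) := measure_union_le _ _
      _ ≤ ENNReal.ofReal ((n : ℝ) ^ (-(3/2) : ℝ)) + ENNReal.ofReal ((n : ℝ) ^ (-(3/2) : ℝ)) :=
          add_le_add h1 h2
      _ = ENNReal.ofReal (2 * (n : ℝ) ^ (-(3/2) : ℝ)) := by
          rw [← ENNReal.ofReal_add (Real.rpow_nonneg (Nat.cast_nonneg n) _)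
            (Real.rpow_nonneg (Nat.cast_nonneg n) _)]
          ring_nf
  obtain ⟨N, hN⟩ := eventually_atTop.mp evP
  have hgsum : Summable (fun n : ℕ => 2 * (n : ℝ) ^ (-(3/2) : ℝ)) :=
    (Real.summable_nat_rpow.mpr (by norm_num)).mul_left 2
  have hsum : (∑' m : ℕ, ℙ (Bad (m + N))) ≠ ⊤ := by
    have hle : (∑' m : ℕ, ℙ (Bad (m + N)))
        ≤ ∑' m : ℕ, ENNReal.ofReal (2 * ((m + N : ℕ) : ℝ) ^ (-(3/2) : ℝ)) :=
      ENNReal.tsum_le_tsum (fun m => hN (m + N) (Nat.le_add_left N m))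
    have hsummable : Summable (fun m : ℕ => 2 * ((m + N : ℕ) : ℝ) ^ (-(3/2) : ℝ)) :=
      (summable_nat_add_iff N).2 hgsum
    have heq : (∑' m : ℕ, ENNReal.ofReal (2 * ((m + N : ℕ) : ℝ) ^ (-(3/2) : ℝ)))
        = ENNReal.ofReal (∑' m : ℕ, 2 * ((m + N : ℕ) : ℝ) ^ (-(3/2) : ℝ)) :=
      (ENNReal.ofReal_tsum_of_nonneg
        (fun m => by positivity) hsummable).symm
    exact ne_top_of_le_ne_top (by rw [heq]; exact ENNReal.ofReal_ne_top) hle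
  have hae := MeasureTheory.ae_eventually_notMem hsum
  filter_upwards [hae] with ω hω
  have hbad : ∀ᶠ n : ℕ in atTop, ω ∉ Bad n := by
    obtain ⟨M, hM⟩ := eventually_atTop.mp hω
    refine eventually_atTop.mpr ⟨M + N, fun n hn => ?_⟩
    have h := hM (n - N) (by omega)
    rwa [Nat.sub_add_cancel (by omega)] at h
  apply Filter.limsup_le_of_le (isCoboundedUnder_le_of_le atTop (x := 0)
    (fun n => div_nonneg (Nat.cast_nonneg _) (mul_nonneg (Nat.cast_nonneg _) (pow_nonneg (hy n).le d))))
  filter_upwards [hbad, evdenom, eventually_ge_atTop 1] with n hnb hden h1n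
  have hnotB1 : ω ∉ Bad1 n := fun h => hnb (by rw [hBdef]; exact Or.inl h)
  have hnotB2 : ω ∉ Bad2 n := fun h => hnb (by rw [hBdef]; exact Or.inr h)
  have hex : ∃ i ∈ Finset.range n, X i ω ∈ Set.pi Set.univ (fun _ : Fin d => Set.Ioi (t n)) := by
    by_contra hcon
    push_neg at hcon
    apply hnotB1
    rw [hB1def]
    exact Set.mem_iInter₂.mpr (fun i hi => hcon i hi)
  obtain ⟨i, hiR, hiT⟩ := hex
  have hdeg : ¬ (2 ≤ Nat.card {j : ℕ // j < n ∧ j ≠ i ∧ ‖X i ω - X j ω‖ ≤ y n}) := by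
    intro hcard
    apply hnotB2
    rw [hB2def]
    exact Set.mem_iUnion₂.mpr ⟨i, hiR, ⟨hiT, hcard⟩⟩
  have hdeg1 : rggDeg X (y n) n i ω ≤ 1 := by
    have : rggDeg X (y n) n i ω
        = Nat.card {j : ℕ // j < n ∧ j ≠ i ∧ ‖X i ω - X j ω‖ ≤ y n} := rfl
    omega
  have hmin : rggMinDeg X (y n) n ω ≤ 1 := by
    refine le_trans (Nat.sInf_le ?_) hdeg1
    exact ⟨i, Set.mem_Iio.mpr (Finset.mem_range.mp hiR), rfl⟩
  have hnR : (0:ℝ) < (n : ℝ) := by exact_mod_cast h1n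
  have hpos : (0:ℝ) < (n : ℝ) * y n ^ d := by
    apply mul_pos hnR (pow_pos (hy n) d)
  calc (rggMinDeg X (y n) n ω : ℝ) / ((n : ℝ) * y n ^ d)
      ≤ 1 / ((n : ℝ) * y n ^ d) := by
        apply div_le_div_of_nonneg_right ?_ hpos.le |>.trans_eq rfl
        exact_mod_cast hmin
    _ ≤ l ^ d := hden
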